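/- arXiv:1511.04292 — 6 statements merged into one kernel-verified Lean document; each statement's English description precedes it below -/
import Mathlib

section
/- Let ω₁,…,ω_P be pairwise distinct nonzero reals and κ₁,…,κ_P pairwise distinct reals with κ_jω_i ≠ 1 for all i,j. Then for all indices i, m in {1,…,P}: Σ_{j=1}^{P} [1/(-1+κ_j ω_m)] · ∏_{k≠j} ∏_{l≠i} (-1+κ_j ω_l)/(κ_j-κ_k) = δ_{im} · ∏_{k=1}^{P} ∏_{l≠i} (ω_i-ω_l)/(-1+κ_k ω_i), where δ_{im} is the Kronecker delta. -/
open Finset Polynomial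

/-- Key summation identity from Lemma 1 of the paper. -/
theorem srj_sum_identity (P : ℕ) (hP : 2 ≤ P) (ω κ : Fin P → ℝ)
    (hω : Function.Injective ω) (hω0 : ∀ i, ω i ≠ 0)
    (hκ : Function.Injective κ)
    (h1 : ∀ i j, κ j * ω i ≠ 1) :
    ∀ i m : Fin P,
      (∑ j, (1 / (-1 + κ j * ω m)) *
          ((∏ k ∈ univ.erase j, (κ j - κ k)⁻¹) *
            ∏ l ∈ univ.erase i, (-1 + κ j * ω l))) =
        (if i = m then (1 : ℝ) else 0) *
          ((∏ k, (-1 + κ k * ω i)⁻¹) * ∏ l ∈ univ.erase i, (ω i - ω l)) := by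
  intro i m
  -- basic nonvanishing facts
  have hd : ∀ j : Fin P, (-1 + κ j * ω m) ≠ 0 := by
    intro j h
    exact h1 m j (by linarith)
  have hDne : (∏ k, (-1 + κ k * ω m)) ≠ 0 := prod_ne_zero_iff.mpr fun k _ => hd k
  have hωm : (ω m) ≠ 0 := hω0 m
  have hcard : ∀ j : Fin P, (univ.erase j).card = P - 1 := by
    intro j
    rw [card_erase_of_mem (mem_univ j), card_univ, Fintype.card_fin]
  -- the polynomial F
  set F : Polynomial ℝ := ∏ l ∈ univ.erase i, (C (ω l) * X + C (-1)) with hF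
  have hκinj : Set.InjOn κ (univ : Finset (Fin P)) := fun a _ b _ h => hκ h
  have hdeg : F.degree < (univ : Finset (Fin P)).card := by
    rw [hF, degree_prod]
    have : ∀ l ∈ univ.erase i, (C (ω l) * X + C (-1)).degree = 1 := by
      intro l _
      exact degree_linear (hω0 l)
    rw [Finset.sum_congr rfl this, Finset.sum_const, hcard, card_univ, Fintype.card_fin]
    rw [nsmul_eq_mul, mul_one]
    exact_mod_cast Nat.sub_lt (by omega) one_pos
  -- Lagrange interpolation identity evaluated at x = (ω m)⁻¹
  set x : ℝ := (ω m)⁻¹ with hx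
  have hinterp := Lagrange.eq_interpolate hκinj hdeg
  have hev : eval x F =
      ∑ j, eval (κ j) F * ∏ k ∈ univ.erase j, ((κ j - κ k)⁻¹ * (x - κ k)) := by
    conv_lhs => rw [hinterp]
    rw [Lagrange.interpolate_apply, eval_finset_sum]
    refine Finset.sum_congr rfl fun j _ => ?_
    rw [eval_mul, eval_C]
    congr 1
    simp only [Lagrange.basis]
    rw [eval_prod]
    refine Finset.prod_congr rfl fun k _ => ?_
    rw [Lagrange.basisDivisor, eval_mul, eval_C, eval_sub, eval_X, eval_C]
  -- compute eval (κ j) F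
  have hevκ : ∀ j : Fin P, eval (κ j) F = ∏ l ∈ univ.erase i, (-1 + κ j * ω l) := by
    intro j
    rw [hF, eval_prod]
    refine Finset.prod_congr rfl fun l _ => ?_
    rw [eval_add, eval_mul, eval_C, eval_C, eval_X]; ring
  -- compute each product ∏ (x - κ k)
  have hprodx : ∀ j : Fin P, (∏ k ∈ univ.erase j, (x - κ k)) =
      (-(ω m)⁻¹) ^ (P - 1) * ((∏ k, (-1 + κ k * ω m)) * (-1 + κ j * ω m)⁻¹) := by
    intro j
    have h1' : ∀ k ∈ univ.erase j, x - κ k = (-(ω m)⁻¹) * (-1 + κ k * ω m) := by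
      intro k _
      rw [hx]
      field_simp
      ring
    rw [Finset.prod_congr rfl h1', Finset.prod_mul_distrib, Finset.prod_const, hcard]
    congr 1
    rw [eq_comm, mul_inv_eq_iff_eq_mul₀ (hd j), mul_comm]
    exact (Finset.mul_prod_erase univ (fun k => -1 + κ k * ω m) (mem_univ j)).symm
  -- compute eval x F
  have hevx : eval x F = ((ω m)⁻¹) ^ (P - 1) * ∏ l ∈ univ.erase i, (ω l - ω m) := by
    rw [hF, eval_prod]
    have h2' : ∀ l ∈ univ.erase i, eval x (C (ω l) * X + C (-1)) = (ω m)⁻¹ * (ω l - ω m) := by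
      intro l _
      rw [eval_add, eval_mul, eval_C, eval_C, eval_X, hx]
      field_simp
      ring
    rw [Finset.prod_congr rfl h2', Finset.prod_mul_distrib, Finset.prod_const, hcard]
  -- derive the closed form for the sum
  set S : ℝ := ∑ j, (1 / (-1 + κ j * ω m)) *
      ((∏ k ∈ univ.erase j, (κ j - κ k)⁻¹) * ∏ l ∈ univ.erase i, (-1 + κ j * ω l)) with hS
  have hsum : eval x F = ((-(ω m)⁻¹) ^ (P - 1) * ∏ k, (-1 + κ k * ω m)) * S := by
    rw [hev, hS, Finset.mul_sum]
    refine Finset.sum_congr rfl fun j _ => ?_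
    rw [hevκ j, Finset.prod_mul_distrib, hprodx j]
    field_simp
  have hkey : S = (∏ k, (-1 + κ k * ω m))⁻¹ * ∏ l ∈ univ.erase i, (ω m - ω l) := by
    have hne : ((-(ω m)⁻¹) ^ (P - 1) * ∏ k, (-1 + κ k * ω m)) ≠ 0 :=
      mul_ne_zero (pow_ne_zero _ (neg_ne_zero.mpr (inv_ne_zero hωm))) hDne
    have h3 : S = eval x F / ((-(ω m)⁻¹) ^ (P - 1) * ∏ k, (-1 + κ k * ω m)) := by
      rw [hsum, mul_div_cancel_left₀ _ hne]
    have hneg : (∏ l ∈ univ.erase i, (ω m - ω l)) =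
        (-1 : ℝ) ^ (P - 1) * ∏ l ∈ univ.erase i, (ω l - ω m) := by
      have : ∀ l ∈ univ.erase i, ω m - ω l = (-1) * (ω l - ω m) := by intro l _; ring
      rw [Finset.prod_congr rfl this, Finset.prod_mul_distrib, Finset.prod_const, hcard]
    rw [h3, hevx, hneg, neg_pow]
    field_simp
    have h4 : ((-1:ℝ)^(P-1))*((-1:ℝ)^(P-1)) = 1 := by
      rw [← pow_add]
      exact Even.neg_one_pow ⟨P-1, rfl⟩
    rw [sq, h4, mul_one]
  rw [hkey]
  by_cases him : i = m
  · subst him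
    simp
  · have hm : m ∈ univ.erase i := mem_erase.mpr ⟨Ne.symm him, mem_univ m⟩
    rw [Finset.prod_eq_zero hm (by ring), if_neg him]
    ring
end

section
/- Let P ≥ 2, let ω₁,…,ω_P be pairwise distinct nonzero reals, β₁,…,β_P nonzero reals, and κ₁,…,κ_P pairwise distinct nonzero reals with κ_i ω_j ≠ 1 for all i,j. Define the P×P matrix A by a_{ij} = κ_i β_j/(1-κ_i ω_j) and define Ã by ã_{ij} = ∏_{k≠j} ∏_{l≠i} (1-κ_j ω_i)(1-κ_k ω_i)(1-κ_j ω_l) / [β_i κ_j (κ_k-κ_j)(ω_l-ω_i)]. Then à · A = I, i.e. à is the inverse of A. -/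
open Finset

section Aux
open Polynomial

private lemma srj_key_sum (P : ℕ) (κ : Fin P → ℝ) (hκ : Function.Injective κ) (y : ℝ)
    (hy : ∀ m, κ m ≠ y) (p : Polynomial ℝ) (hdeg : p.degree < P) :
    ∑ m, p.eval (κ m) / ((κ m - y) * ∏ k ∈ univ.erase m, (κ m - κ k)) =
      - (p.eval y / ∏ k, (y - κ k)) := by
  have hinj : Set.InjOn κ (univ : Finset (Fin P)) := hκ.injOn
  have hcard : (#(univ : Finset (Fin P))) = P := by simp
  have hint := Lagrange.eq_interpolate (f := p) hinj (by rw [hcard]; exact_mod_cast hdeg)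
  have he := Lagrange.eval_interpolate_not_at_node (x := y) (s := univ) (v := κ)
      (fun i => p.eval (κ i)) (fun i _ => (hy i).symm)
  rw [← hint] at he
  have hnz : Polynomial.eval y (Lagrange.nodal univ κ) ≠ 0 := by
    rw [Lagrange.eval_nodal]
    exact prod_ne_zero_iff.2 fun k _ => sub_ne_zero_of_ne (Ne.symm (hy k))
  have hsum : ∑ m, Lagrange.nodalWeight univ κ m * (y - κ m)⁻¹ * p.eval (κ m)
      = p.eval y / Polynomial.eval y (Lagrange.nodal univ κ) := by
    rw [eq_div_iff hnz, he]; ring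
  calc ∑ m, p.eval (κ m) / ((κ m - y) * ∏ k ∈ univ.erase m, (κ m - κ k))
      = ∑ m, -(Lagrange.nodalWeight univ κ m * (y - κ m)⁻¹ * p.eval (κ m)) := by
        refine sum_congr rfl fun m _ => ?_
        have h1 : κ m - y ≠ 0 := sub_ne_zero_of_ne (hy m)
        have h2 : (∏ k ∈ univ.erase m, (κ m - κ k)) ≠ 0 :=
          prod_ne_zero_iff.2 fun k hk =>
            sub_ne_zero_of_ne fun h => (mem_erase.1 hk).1 (hκ h).symm
        rw [Lagrange.nodalWeight, prod_inv_distrib, div_eq_mul_inv, mul_inv,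
          ← neg_sub (κ m) y, inv_neg]
        ring
    _ = -(p.eval y / Polynomial.eval y (Lagrange.nodal univ κ)) := by
        rw [sum_neg_distrib, hsum]
    _ = - (p.eval y / ∏ k, (y - κ k)) := by rw [Lagrange.eval_nodal]

end Aux

set_option maxHeartbeats 1000000 in
/-- Lemma 1 (first part): explicit inverse of the Cauchy-like matrix
`A i j = κ i * β j / (1 - κ i * ω j)`. -/
theorem srj_matrix_A_inverse (P : ℕ) (hP : 2 ≤ P) (ω β κ : Fin P → ℝ)
    (hω : Function.Injective ω) (hω0 : ∀ i, ω i ≠ 0)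
    (hβ : ∀ i, β i ≠ 0)
    (hκ : Function.Injective κ) (hκ0 : ∀ i, κ i ≠ 0)
    (h1 : ∀ i j, κ i * ω j ≠ 1)
    (A At : Matrix (Fin P) (Fin P) ℝ)
    (hA : A = fun i j => κ i * β j / (1 - κ i * ω j))
    (hAt : At = fun i j =>
      (1 - κ j * ω i) / (β i * κ j) *
        (∏ k ∈ univ.erase j, (1 - κ k * ω i) / (κ k - κ j)) *
        ∏ l ∈ univ.erase i, (1 - κ j * ω l) / (ω l - ω i)) :
    At * A = 1 := by
  subst hA hAt
  ext i j
  simp only [Matrix.mul_apply, Matrix.one_apply]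
  erw [Matrix.mul_apply]
  set y : ℝ := (ω j)⁻¹ with hy_def
  set p : Polynomial ℝ := ∏ l ∈ univ.erase i, (1 - Polynomial.C (ω l) * Polynomial.X)
    with hp_def
  have hpe : ∀ t : ℝ, p.eval t = ∏ l ∈ univ.erase i, (1 - t * ω l) := by
    intro t
    rw [hp_def, Polynomial.eval_prod]
    refine prod_congr rfl fun l _ => ?_
    rw [Polynomial.eval_sub, Polynomial.eval_one, Polynomial.eval_mul, Polynomial.eval_C,
      Polynomial.eval_X, mul_comm]
  have hpne : p ≠ 0 := by
    rw [hp_def]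
    refine prod_ne_zero_iff.2 fun l _ => fun h => ?_
    have h2 := congrArg (Polynomial.eval 0) h
    simp only [Polynomial.eval_sub, Polynomial.eval_one, Polynomial.eval_mul,
      Polynomial.eval_C, Polynomial.eval_X, Polynomial.eval_zero, mul_zero, sub_zero] at h2
    exact one_ne_zero h2
  have hpdeg : p.degree < P := by
    rw [← Polynomial.natDegree_lt_iff_degree_lt hpne]
    have h2 : p.natDegree ≤ ∑ l ∈ univ.erase i, (1 - Polynomial.C (ω l) *
        Polynomial.X : Polynomial ℝ).natDegree := hp_def ▸ Polynomial.natDegree_prod_le _ _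
    have h3 : ∀ l : Fin P, (1 - Polynomial.C (ω l) * Polynomial.X :
        Polynomial ℝ).natDegree ≤ 1 := by
      intro l
      have h5 : (Polynomial.C (ω l) * Polynomial.X : Polynomial ℝ).natDegree ≤ 1 :=
        le_trans (Polynomial.natDegree_C_mul_le _ _) (le_of_eq Polynomial.natDegree_X)
      exact le_trans (Polynomial.natDegree_sub_le _ _) (by simp [h5])
    have h4 : p.natDegree ≤ P - 1 := by
      refine le_trans h2 (le_trans (Finset.sum_le_card_nsmul _ _ 1 fun l _ => h3 l) ?_)
      simp [card_erase_of_mem (mem_univ i)]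
    omega
  have hyne : ∀ m, κ m ≠ y := by
    intro m h
    exact h1 m j (by rw [h, hy_def, inv_mul_cancel₀ (hω0 j)])
  have hκmy : ∀ m, κ m - y ≠ 0 := fun m => sub_ne_zero_of_ne (hyne m)
  have hPm : ∀ m : Fin P, (∏ k ∈ univ.erase m, (κ m - κ k)) ≠ 0 := fun m =>
    prod_ne_zero_iff.2 fun k hk => sub_ne_zero_of_ne fun h => (mem_erase.1 hk).1 (hκ h).symm
  have hR : (∏ l ∈ univ.erase i, (ω l - ω i)) ≠ 0 :=
    prod_ne_zero_iff.2 fun l hl => sub_ne_zero_of_ne fun h => (mem_erase.1 hl).1 (hω h)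
  have h1m : ∀ m l, (1 : ℝ) - κ m * ω l ≠ 0 := fun m l => sub_ne_zero_of_ne (Ne.symm (h1 m l))
  have hQ : (∏ k, (1 - κ k * ω i)) ≠ 0 := prod_ne_zero_iff.2 fun k _ => h1m k i
  have hcarde : #(univ.erase i) = P - 1 := by
    simp [card_erase_of_mem (mem_univ i)]
  -- parity split for the sign
  obtain ⟨e, heP, heP1, hecases⟩ :
      ∃ e : ℝ, (-1 : ℝ) ^ P = e ∧ (-1 : ℝ) ^ (P - 1) = -e ∧ (e = 1 ∨ e = -1) := by
    rcases Nat.even_or_odd P with h | h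
    · obtain ⟨t, ht⟩ := h
      exact ⟨1, by simp [Even.neg_one_pow ⟨t, ht⟩],
        by simp [Odd.neg_one_pow (⟨t - 1, by omega⟩ : Odd (P - 1))], Or.inl rfl⟩
    · obtain ⟨t, ht⟩ := h
      exact ⟨-1, by simp [Odd.neg_one_pow ⟨t, ht⟩],
        by simp [Even.neg_one_pow (⟨t, by omega⟩ : Even (P - 1))], Or.inr rfl⟩
  have hene : e ≠ 0 := by rcases hecases with h | h <;> simp [h]
  -- per-summand identity
  have hstep : ∀ m : Fin P,
      ((1 - κ m * ω i) / (β i * κ m) *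
        (∏ k ∈ univ.erase m, (1 - κ k * ω i) / (κ k - κ m)) *
        ∏ l ∈ univ.erase i, (1 - κ m * ω l) / (ω l - ω i)) *
        (κ m * β j / (1 - κ m * ω j)) =
      ((∏ k, (1 - κ k * ω i)) * β j /
          (β i * (∏ l ∈ univ.erase i, (ω l - ω i)) * ω j * e)) *
        (p.eval (κ m) / ((κ m - y) * ∏ k ∈ univ.erase m, (κ m - κ k))) := by
    intro m
    have hd : (∏ k ∈ univ.erase m, (κ k - κ m)) =
        (-e) * ∏ k ∈ univ.erase m, (κ m - κ k) := by
      calc (∏ k ∈ univ.erase m, (κ k - κ m))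
          = ∏ k ∈ univ.erase m, ((-1) * (κ m - κ k)) := prod_congr rfl fun k _ => by ring
        _ = (-1 : ℝ) ^ #(univ.erase m) * ∏ k ∈ univ.erase m, (κ m - κ k) := by
            rw [prod_mul_distrib, prod_const]
        _ = (-e) * ∏ k ∈ univ.erase m, (κ m - κ k) := by
            rw [card_erase_of_mem (mem_univ m), card_univ, Fintype.card_fin, heP1]
    have hQm : (∏ k, (1 - κ k * ω i)) =
        (1 - κ m * ω i) * ∏ k ∈ univ.erase m, (1 - κ k * ω i) :=
      (mul_prod_erase univ _ (mem_univ m)).symm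
    have hj' : (1 : ℝ) - κ m * ω j = -ω j * (κ m - y) := by
      have hc : (ω j)⁻¹ * ω j = 1 := inv_mul_cancel₀ (hω0 j)
      rw [hy_def]
      linear_combination -hc
    rw [prod_div_distrib, prod_div_distrib, hpe, hd, hQm, hj']
    generalize hzg : κ m - y = z
    have hz : z ≠ 0 := hzg ▸ hκmy m
    have ha2 := hPm m
    set a1 := ∏ k ∈ univ.erase m, (1 - κ k * ω i) with ha1_def
    set a2 := ∏ k ∈ univ.erase m, (κ m - κ k) with ha2_def
    set a3 := ∏ l ∈ univ.erase i, (1 - κ m * ω l) with ha3_def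
    set Rp := ∏ l ∈ univ.erase i, (ω l - ω i) with hRp_def
    simp only [div_mul_div_comm]
    rw [div_eq_div_iff (by simp [mul_eq_zero, hβ i, hκ0 m, hene, ha2, hR, hω0 j, hz])
      (by simp [mul_eq_zero, hβ i, hene, ha2, hR, hω0 j, hz])]
    ring
  have hsum1 : (∑ m, ((1 - κ m * ω i) / (β i * κ m) *
        (∏ k ∈ univ.erase m, (1 - κ k * ω i) / (κ k - κ m)) *
        ∏ l ∈ univ.erase i, (1 - κ m * ω l) / (ω l - ω i)) *
        (κ m * β j / (1 - κ m * ω j))) =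
      ((∏ k, (1 - κ k * ω i)) * β j /
          (β i * (∏ l ∈ univ.erase i, (ω l - ω i)) * ω j * e)) *
        (- (p.eval y / ∏ k, (y - κ k))) := by
    rw [← srj_key_sum P κ hκ y hyne p hpdeg, mul_sum]
    exact sum_congr rfl fun m _ => hstep m
  rw [hsum1]
  by_cases hij : i = j
  · subst hij
    rw [if_pos rfl]
    have hpy : p.eval y = (-e) * (∏ l ∈ univ.erase i, (ω l - ω i)) *
        ((ω i)⁻¹) ^ (P - 1) := by
      rw [hpe]
      calc (∏ l ∈ univ.erase i, (1 - y * ω l))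
          = ∏ l ∈ univ.erase i, ((-1) * ((ω l - ω i) * (ω i)⁻¹)) := by
            refine prod_congr rfl fun l _ => ?_
            rw [hy_def]
            first
            | (field_simp [hω0 i]; ring)
            | field_simp [hω0 i]
        _ = (-1 : ℝ) ^ #(univ.erase i) *
            ((∏ l ∈ univ.erase i, (ω l - ω i)) * ∏ l ∈ univ.erase i, (ω i)⁻¹) := by
            rw [prod_mul_distrib, prod_mul_distrib, prod_const]
        _ = (-e) * (∏ l ∈ univ.erase i, (ω l - ω i)) * ((ω i)⁻¹) ^ (P - 1) := by
            rw [prod_const, hcarde, heP1]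
            ring
    have hyk : (∏ k, (y - κ k)) = ((ω i)⁻¹) ^ P * ∏ k, (1 - κ k * ω i) := by
      calc (∏ k, (y - κ k)) = ∏ k, ((ω i)⁻¹ * (1 - κ k * ω i)) := by
            refine prod_congr rfl fun k _ => ?_
            rw [hy_def]
            first
            | (field_simp [hω0 i]; ring)
            | field_simp [hω0 i]
        _ = ((ω i)⁻¹) ^ P * ∏ k, (1 - κ k * ω i) := by
            rw [prod_mul_distrib, prod_const, card_univ, Fintype.card_fin]
    have hw : ((ω i)⁻¹ : ℝ) ^ P = ((ω i)⁻¹) ^ (P - 1) * (ω i)⁻¹ := by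
      conv_lhs => rw [show P = (P - 1) + 1 by omega]
      rw [pow_succ]
    rw [hpy, hyk, hw]
    have hwne : ((ω i)⁻¹ : ℝ) ^ (P - 1) ≠ 0 := pow_ne_zero _ (inv_ne_zero (hω0 i))
    have final : ∀ Q R W w b ee : ℝ, Q ≠ 0 → R ≠ 0 → W ≠ 0 → w ≠ 0 → b ≠ 0 → ee ≠ 0 →
        Q * b / (b * R * w * ee) * -(-ee * R * W / (W * w⁻¹ * Q)) = 1 := by
      intro Q R W w b ee hQ' hR' hW' hw' hb' he'
      field_simp
    exact final _ _ _ _ _ _ hQ hR hwne (hω0 i) (hβ i) hene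
  · rw [if_neg hij]
    have hpy0 : p.eval y = 0 := by
      rw [hpe]
      refine prod_eq_zero (mem_erase.2 ⟨Ne.symm hij, mem_univ j⟩) ?_
      rw [hy_def, inv_mul_cancel₀ (hω0 j), sub_self]
    rw [hpy0]
    simp
end

section
/- Let P ≥ 2, let ω₁,…,ω_P be pairwise distinct nonzero reals, and κ₁,…,κ_{P-1} pairwise distinct reals with κ_i ω_j ≠ 1 for all relevant i,j. Define the (P-1)×(P-1) matrix B by b_{ij} = (1-ω_j/ω_P)/(1-κ_i ω_j) for i,j = 1,…,P-1, and define B̃ by b̃_{ij} = [ω_P(1-κ_j ω_i)/(1-κ_j ω_P)] · ∏_{k≠j, k≤P-1} ∏_{l≠i, l≤P} (1-κ_k ω_i)(1-κ_j ω_l)/[(κ_k-κ_j)(ω_l-ω_i)]. Then B̃ · B = I. -/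
open Finset Polynomial

lemma erase_last_eq (n : ℕ) :
    (univ : Finset (Fin (n+1))).erase (Fin.last n) = univ.map Fin.castSuccEmb := by
  ext k
  simp only [mem_erase, mem_univ, and_true, mem_map, true_and, Fin.coe_castSuccEmb]
  constructor
  · intro hk
    exact ⟨k.castPred hk, by simp⟩
  · rintro ⟨a, rfl⟩
    exact (Fin.castSucc_lt_last a).ne

lemma prod_erase_last {n : ℕ} (f : Fin (n+1) → ℝ) :
    ∏ k ∈ univ.erase (Fin.last n), f k = ∏ k : Fin n, f k.castSucc := by
  rw [erase_last_eq, Finset.prod_map]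
  exact Finset.prod_congr rfl fun x _ => rfl

lemma prod_erase_castSucc {n : ℕ} (f : Fin (n+1) → ℝ) (j : Fin n) :
    ∏ k ∈ univ.erase j.castSucc, f k
      = f (Fin.last n) * ∏ k ∈ univ.erase j, f k.castSucc := by
  have h1 : (univ : Finset (Fin (n+1))).erase j.castSucc
      = insert (Fin.last n) ((univ.erase j).map Fin.castSuccEmb) := by
    have h2 : ((univ.erase j).map Fin.castSuccEmb)
        = (univ.map Fin.castSuccEmb).erase j.castSucc := by
      rw [Finset.map_erase]; rfl
    rw [h2, ← erase_last_eq, Finset.erase_right_comm, Finset.insert_erase]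
    simp [mem_erase, (Fin.castSucc_lt_last j).ne']
  have h3 : Fin.last n ∉ (univ.erase j).map Fin.castSuccEmb := by
    simp only [mem_map, Fin.coe_castSuccEmb, not_exists, not_and]
    exact fun x _ => (Fin.castSucc_lt_last x).ne
  rw [h1, Finset.prod_insert h3, Finset.prod_map]
  exact congrArg _ (Finset.prod_congr rfl fun x _ => rfl)

lemma scalar_key (W u b s1 P1 Q1 H1 E d ωm kc : ℝ) (hb : b ≠ 0) (hωm : ωm ≠ 0)
    (hkc : kc ≠ 0) (hE : E ≠ 0) :
    W * u / b * (s1 * (P1 * Q1)) * (b * H1 * E⁻¹) * (d / (-ωm * kc))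
      = s1 * -ωm⁻¹ * W * d * (u * P1) * E⁻¹ * (H1 * (kc⁻¹ * Q1)) := by
  field_simp

lemma key_sum {ι : Type*} [DecidableEq ι] (s : Finset ι) (v : ι → ℝ)
    (hvs : Set.InjOn v s) (h : Polynomial ℝ) (hdeg : h.degree < s.card) :
    ∑ i ∈ s, h.eval (v i) * ∏ j ∈ s.erase i, (v i - v j)⁻¹
      = h.coeff (s.card - 1) := by
  conv_rhs => rw [Lagrange.eq_interpolate hvs hdeg]
  rw [Lagrange.interpolate_apply, Polynomial.finset_sum_coeff]
  refine Finset.sum_congr rfl fun i hi => ?_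
  rw [Polynomial.coeff_C_mul]
  congr 1
  have hb : Lagrange.basis s v i
      = Polynomial.C (∏ j ∈ s.erase i, (v i - v j)⁻¹)
        * ∏ j ∈ s.erase i, (Polynomial.X - Polynomial.C (v j)) := by
    rw [Lagrange.basis, map_prod, ← Finset.prod_mul_distrib]
    exact Finset.prod_congr rfl fun j _ => rfl
  have hmonic : (∏ j ∈ s.erase i, (Polynomial.X - Polynomial.C (v j))).Monic :=
    monic_prod_of_monic _ _ fun j _ => monic_X_sub_C _
  have hnd : (∏ j ∈ s.erase i, (Polynomial.X - Polynomial.C (v j))).natDegree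
      = s.card - 1 := by
    rw [Polynomial.natDegree_prod _ _ fun j _ => X_sub_C_ne_zero _]
    simp [Finset.card_erase_of_mem hi]
  rw [hb, Polynomial.coeff_C_mul, ← hnd, hmonic.coeff_natDegree, mul_one]

set_option maxHeartbeats 1000000 in
/-- Lemma 1 (second part): explicit inverse of the matrix
`B i j = (1 - ω j / ω P) / (1 - κ i * ω j)`, with `P = n + 1` levels. -/
theorem srj_matrix_B_inverse (n : ℕ) (hn : 1 ≤ n)
    (ω : Fin (n + 1) → ℝ) (κ : Fin n → ℝ)
    (hω : Function.Injective ω) (hω0 : ∀ i, ω i ≠ 0)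
    (hκ : Function.Injective κ)
    (h1 : ∀ (i : Fin n) (j : Fin (n + 1)), κ i * ω j ≠ 1)
    (B Bt : Matrix (Fin n) (Fin n) ℝ)
    (hB : B = fun i j =>
      (1 - ω j.castSucc / ω (Fin.last n)) / (1 - κ i * ω j.castSucc))
    (hBt : Bt = fun i j =>
      ω (Fin.last n) * (1 - κ j * ω i.castSucc) / (1 - κ j * ω (Fin.last n)) *
        (∏ k ∈ univ.erase j, (1 - κ k * ω i.castSucc) / (κ k - κ j)) *
        ∏ l ∈ univ.erase i.castSucc, (1 - κ j * ω l) / (ω l - ω i.castSucc)) :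
    Bt * B = 1 := by
  subst hB hBt
  obtain ⟨p, rfl⟩ : ∃ p, n = p + 1 := ⟨n - 1, (Nat.succ_pred_eq_of_pos hn).symm⟩
  ext i m
  -- notation
  set W : ℝ := ω (Fin.last (p+1)) with hWdef
  set c : ℝ := (ω m.castSucc)⁻¹ with hcdef
  set v : Fin (p+2) → ℝ := Fin.snoc κ c with hvdef
  have hωm : ω m.castSucc ≠ 0 := hω0 _
  have hWne : W ≠ 0 := hω0 _
  have hκc : ∀ k : Fin (p+1), κ k ≠ c := by
    intro k hk
    exact h1 k m.castSucc (by rw [hk, hcdef, inv_mul_cancel₀ hωm])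
  have hvcs : ∀ j : Fin (p+1), v j.castSucc = κ j := fun j => Fin.snoc_castSucc _ _ _
  have hvlast : v (Fin.last (p+1)) = c := Fin.snoc_last _ _
  have hvinj : Set.InjOn v (univ : Finset (Fin (p+2))) := by
    intro a _ b _ hab
    induction a using Fin.lastCases with
    | last =>
      induction b using Fin.lastCases with
      | last => rfl
      | cast b =>
        rw [hvlast, hvcs] at hab
        exact absurd hab.symm (hκc b)
    | cast a =>
      induction b using Fin.lastCases with
      | last =>
        rw [hvlast, hvcs] at hab
        exact absurd hab (hκc a)
      | cast b =>
        rw [hvcs, hvcs] at hab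
        exact congrArg Fin.castSucc (hκ hab)
  -- the polynomial
  set h : Polynomial ℝ :=
    ∏ l ∈ (univ : Finset (Fin (p+1))).erase i, (1 - Polynomial.C (ω l.castSucc) * Polynomial.X)
    with hhdef
  have hhnd : h.natDegree ≤ p := by
    refine le_trans (Polynomial.natDegree_prod_le _ _) ?_
    calc ∑ l ∈ (univ : Finset (Fin (p+1))).erase i,
          (1 - Polynomial.C (ω l.castSucc) * Polynomial.X).natDegree
        ≤ ∑ l ∈ (univ : Finset (Fin (p+1))).erase i, 1 := by
          refine Finset.sum_le_sum fun l _ => ?_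
          calc (1 - Polynomial.C (ω l.castSucc) * Polynomial.X).natDegree
              ≤ max (1 : Polynomial ℝ).natDegree
                  (Polynomial.C (ω l.castSucc) * Polynomial.X).natDegree :=
                Polynomial.natDegree_sub_le _ _
            _ ≤ 1 := by
                simp [Polynomial.natDegree_C_mul_le]
                exact Polynomial.natDegree_C_mul_le _ _ |>.trans (by simp)
      _ = p := by
          rw [Finset.sum_const, smul_eq_mul, mul_one,
            Finset.card_erase_of_mem (mem_univ i), Finset.card_univ, Fintype.card_fin]
          omega
  have hevalh : ∀ t : ℝ, h.eval t = ∏ l ∈ (univ : Finset (Fin (p+1))).erase i,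
      (1 - ω l.castSucc * t) := by
    intro t
    rw [hhdef, Polynomial.eval_prod]
    exact Finset.prod_congr rfl fun l _ => by simp
  have hcard : ((univ : Finset (Fin (p+2))).card) = p + 2 := by
    rw [Finset.card_univ, Fintype.card_fin]
  have hkey : ∑ j : Fin (p+2), h.eval (v j) * ∏ k ∈ univ.erase j, (v j - v k)⁻¹ = 0 := by
    have := key_sum (univ : Finset (Fin (p+2))) v hvinj h
      (by
        rw [hcard]
        exact lt_of_le_of_lt (Polynomial.degree_le_natDegree)
          (by exact_mod_cast lt_of_le_of_lt hhnd (by omega)))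
    rw [hcard] at this
    rw [this]
    exact Polynomial.coeff_eq_zero_of_natDegree_lt (by omega)

  -- split the key sum
  set A : ℝ := ∏ k : Fin (p+1), (1 - κ k * ω i.castSucc) with hAdef
  set E : ℝ := ∏ l ∈ (univ : Finset (Fin (p+2))).erase i.castSucc,
      (ω l - ω i.castSucc) with hEdef
  set s1 : ℝ := (-1 : ℝ)^p with hs1def
  set K : ℝ := s1 * (-c) * W * (1 - ω m.castSucc / W) * A * E⁻¹ with hKdef
  have hsplit : ∑ j : Fin (p+1),
        h.eval (v j.castSucc) * ∏ k ∈ univ.erase j.castSucc, (v j.castSucc - v k)⁻¹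
      = -(h.eval c * ∏ k : Fin (p+1), (c - κ k)⁻¹) := by
    have hs := Fin.sum_univ_castSucc
      (fun j : Fin (p+2) => h.eval (v j) * ∏ k ∈ univ.erase j, (v j - v k)⁻¹)
    rw [hkey] at hs
    have hlast : h.eval (v (Fin.last (p+1)))
          * ∏ k ∈ univ.erase (Fin.last (p+1)), (v (Fin.last (p+1)) - v k)⁻¹
        = h.eval c * ∏ k : Fin (p+1), (c - κ k)⁻¹ := by
      rw [hvlast, prod_erase_last]
      congr 1
      exact Finset.prod_congr rfl fun k _ => by rw [hvcs]
    rw [hlast] at hs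
    linarith
  -- nonvanishing facts
  have hsub1 : ∀ j : Fin (p+1), (1 : ℝ) - κ j * W ≠ 0 := fun j =>
    sub_ne_zero.mpr (Ne.symm (h1 j (Fin.last (p+1))))
  have hκcne : ∀ j : Fin (p+1), κ j - c ≠ 0 := fun j => sub_ne_zero.mpr (hκc j)
  have hEne : E ≠ 0 := by
    rw [hEdef]
    exact Finset.prod_ne_zero_iff.mpr fun l hl =>
      sub_ne_zero.mpr fun hh => (Finset.mem_erase.mp hl).1 (hω hh)
  have hAne : A ≠ 0 := by
    rw [hAdef]
    exact Finset.prod_ne_zero_iff.mpr fun k _ =>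
      sub_ne_zero.mpr (Ne.symm (h1 k i.castSucc))
  -- per-term identity
  have hterm : ∀ j : Fin (p+1),
      W * (1 - κ j * ω i.castSucc) / (1 - κ j * W) *
          (∏ k ∈ univ.erase j, (1 - κ k * ω i.castSucc) / (κ k - κ j)) *
          (∏ l ∈ univ.erase i.castSucc, (1 - κ j * ω l) / (ω l - ω i.castSucc)) *
          ((1 - ω m.castSucc / W) / (1 - κ j * ω m.castSucc))
      = K * (h.eval (v j.castSucc)
          * ∏ k ∈ univ.erase j.castSucc, (v j.castSucc - v k)⁻¹) := by
    intro j
    have hQ : ∏ k ∈ univ.erase j, (1 - κ k * ω i.castSucc) / (κ k - κ j)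
        = s1 * ((∏ k ∈ univ.erase j, (1 - κ k * ω i.castSucc))
            * ∏ k ∈ univ.erase j, (κ j - κ k)⁻¹) := by
      have hc1 : ∀ k ∈ univ.erase j, (1 - κ k * ω i.castSucc) / (κ k - κ j)
          = (-1) * ((1 - κ k * ω i.castSucc) * (κ j - κ k)⁻¹) := by
        intro k _
        rw [div_eq_mul_inv, show κ k - κ j = -(κ j - κ k) by ring, inv_neg]
        ring
      rw [Finset.prod_congr rfl hc1, Finset.prod_mul_distrib, Finset.prod_mul_distrib,
        Finset.prod_const, Finset.card_erase_of_mem (mem_univ j), Finset.card_univ,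
        Fintype.card_fin, Nat.add_sub_cancel, hs1def]
    have hP : ∏ l ∈ univ.erase i.castSucc, (1 - κ j * ω l) / (ω l - ω i.castSucc)
        = ((1 - κ j * W) * ∏ l ∈ univ.erase i, (1 - κ j * ω l.castSucc)) * E⁻¹ := by
      rw [Finset.prod_div_distrib, prod_erase_castSucc (fun l => 1 - κ j * ω l) i,
        ← hWdef, div_eq_mul_inv, ← hEdef]
    have hHj : h.eval (v j.castSucc)
        = ∏ l ∈ (univ : Finset (Fin (p+1))).erase i, (1 - κ j * ω l.castSucc) := by
      rw [hvcs, hevalh]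
      exact Finset.prod_congr rfl fun l _ => by ring
    have hR : ∏ k ∈ univ.erase j.castSucc, (v j.castSucc - v k)⁻¹
        = (κ j - c)⁻¹ * ∏ k ∈ univ.erase j, (κ j - κ k)⁻¹ := by
      rw [prod_erase_castSucc (fun k => (v j.castSucc - v k)⁻¹) j, hvlast, hvcs]
      congr 1
      exact Finset.prod_congr rfl fun k _ => by rw [hvcs]
    have hA1 : (1 - κ j * ω i.castSucc)
        * ∏ k ∈ univ.erase j, (1 - κ k * ω i.castSucc) = A := by
      rw [hAdef]
      exact Finset.mul_prod_erase univ (fun k => 1 - κ k * ω i.castSucc) (mem_univ j)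
    have hm1 : (1 : ℝ) - κ j * ω m.castSucc = -(ω m.castSucc) * (κ j - c) := by
      rw [hcdef]
      field_simp
      ring
    have hκcne' : κ j - (ω m.castSucc)⁻¹ ≠ 0 := by
      have := hκcne j; rwa [hcdef] at this
    rw [hQ, hP, hHj, hR, hKdef, hm1, ← hA1, hcdef]
    exact scalar_key W (1 - κ j * ω i.castSucc) (1 - κ j * W) s1
      (∏ k ∈ univ.erase j, (1 - κ k * ω i.castSucc))
      (∏ k ∈ univ.erase j, (κ j - κ k)⁻¹)
      (∏ l ∈ (univ : Finset (Fin (p+1))).erase i, (1 - κ j * ω l.castSucc))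
      E (1 - ω m.castSucc / W) (ω m.castSucc) (κ j - (ω m.castSucc)⁻¹)
      (hsub1 j) hωm hκcne' hEne
  erw [Matrix.mul_apply, Matrix.one_apply]
  calc ∑ j, (W * (1 - κ j * ω i.castSucc) / (1 - κ j * W) *
          (∏ k ∈ univ.erase j, (1 - κ k * ω i.castSucc) / (κ k - κ j)) *
          (∏ l ∈ univ.erase i.castSucc, (1 - κ j * ω l) / (ω l - ω i.castSucc))) *
          ((1 - ω m.castSucc / W) / (1 - κ j * ω m.castSucc))
      = ∑ j : Fin (p+1), K * (h.eval (v j.castSucc)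
          * ∏ k ∈ univ.erase j.castSucc, (v j.castSucc - v k)⁻¹) := by
        refine Finset.sum_congr rfl fun j _ => ?_
        rw [← hterm j]
    _ = K * -(h.eval c * ∏ k : Fin (p+1), (c - κ k)⁻¹) := by
        rw [← Finset.mul_sum, hsplit]
    _ = if i = m then 1 else 0 := by
        by_cases him : i = m
        · subst him
          rw [if_pos rfl]
          -- diagonal case
          set F : ℝ := ∏ l ∈ (univ : Finset (Fin (p+1))).erase i,
              (ω l.castSucc - ω i.castSucc) with hFdef
          have hFne : F ≠ 0 := by
            rw [hFdef]
            exact Finset.prod_ne_zero_iff.mpr fun l hl =>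
              sub_ne_zero.mpr fun hh =>
                (Finset.mem_erase.mp hl).1 (Fin.castSucc_injective _ (hω hh))
          have hWi : W - ω i.castSucc ≠ 0 := by
            rw [hWdef]
            exact sub_ne_zero.mpr fun hh => (Fin.castSucc_lt_last i).ne' (hω hh)
          have hEF : E = (W - ω i.castSucc) * F := by
            rw [hEdef, prod_erase_castSucc (fun l => ω l - ω i.castSucc) i,
              ← hWdef, hFdef]
          have hωi : ω i.castSucc ≠ 0 := hω0 _
          have hHcF : h.eval c * F⁻¹ = s1 * c^p := by
            rw [hevalh, hFdef, ← Finset.prod_inv_distrib, ← Finset.prod_mul_distrib]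
            have hc2 : ∀ l ∈ (univ : Finset (Fin (p+1))).erase i,
                (1 - ω l.castSucc * c) * (ω l.castSucc - ω i.castSucc)⁻¹ = -c := by
              intro l hl
              have hne : ω l.castSucc - ω i.castSucc ≠ 0 :=
                sub_ne_zero.mpr fun hh =>
                  (Finset.mem_erase.mp hl).1 (Fin.castSucc_injective _ (hω hh))
              have hfac : (1 : ℝ) - ω l.castSucc * c
                  = -c * (ω l.castSucc - ω i.castSucc) := by
                rw [hcdef]
                field_simp
                ring
              rw [hfac, mul_assoc, mul_inv_cancel₀ hne, mul_one]
            rw [Finset.prod_congr rfl hc2, Finset.prod_const,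
              Finset.card_erase_of_mem (mem_univ i), Finset.card_univ,
              Fintype.card_fin, Nat.add_sub_cancel, neg_pow, hs1def]
          have hHc : h.eval c = s1 * c^p * F := by
            rw [← hHcF, mul_assoc, inv_mul_cancel₀ hFne, mul_one]
          have hCk : ∏ k : Fin (p+1), (c - κ k)⁻¹ = A⁻¹ * (ω i.castSucc)^(p+1) := by
            have hc3 : ∀ k ∈ (univ : Finset (Fin (p+1))),
                (c - κ k)⁻¹ = (1 - κ k * ω i.castSucc)⁻¹ * ω i.castSucc := by
              intro k _
              have hfac : c - κ k = (1 - κ k * ω i.castSucc) * c := by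
                rw [hcdef]
                field_simp
              rw [hfac, mul_inv, hcdef, inv_inv]
            rw [Finset.prod_congr rfl hc3, Finset.prod_mul_distrib,
              ← Finset.prod_inv_distrib, Finset.prod_const,
              Finset.card_univ, Fintype.card_fin]
          have hcne : c ≠ 0 := by rw [hcdef]; exact inv_ne_zero hωi
          have e1 : W * (1 - ω i.castSucc / W) = W - ω i.castSucc := by
            field_simp
          have e3 : c * (c^p * ω i.castSucc^(p+1)) = 1 := by
            have : c * (c^p * ω i.castSucc^(p+1)) = (c * ω i.castSucc)^(p+1) := by
              ring
            rw [this, hcdef, inv_mul_cancel₀ hωi, one_pow]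
          have e4 : s1 * s1 = 1 := by
            rw [hs1def, ← mul_pow]
            norm_num
          rw [hKdef, hHc, hCk, hEF]
          calc s1 * (-c) * W * (1 - ω i.castSucc / W) * A * ((W - ω i.castSucc) * F)⁻¹
                * -(s1 * c^p * F * (A⁻¹ * ω i.castSucc^(p+1)))
              = (s1 * s1) * (c * (c^p * ω i.castSucc^(p+1)))
                * (W * (1 - ω i.castSucc / W) * (W - ω i.castSucc)⁻¹)
                * (A * A⁻¹) * (F * F⁻¹) := by
                rw [mul_inv]
                ring
            _ = 1 := by
                rw [e4, e3, e1, mul_inv_cancel₀ hWi, mul_inv_cancel₀ hAne,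
                  mul_inv_cancel₀ hFne]
                norm_num
        · rw [if_neg him]
          have hHc0 : h.eval c = 0 := by
            rw [hevalh]
            refine Finset.prod_eq_zero (Finset.mem_erase.mpr ⟨Ne.symm him, mem_univ m⟩) ?_
            rw [hcdef, mul_inv_cancel₀ hωm, sub_self]
          rw [hHc0]
          ring
end

section
/- Let P ≥ 2, ω₁,…,ω_P pairwise distinct nonzero reals, κ₁,…,κ_{P-1} pairwise distinct reals with κ_k ω_i ≠ 1 and 1-κ_j ω_P ≠ 0 for all relevant indices. Define β_i = ∏_{k=1}^{P-1} ∏_{l≠i} (1-κ_k ω_i) ω_l/(ω_l-ω_i) for i = 1,…,P-1. Then these β_i satisfy the linear system Σ_{j=1}^{P-1} (1-ω_j/ω_P) β_j/(1-κ_i ω_j) = 1 for every i = 1,…,P-1. -/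
open Finset Polynomial

/-- Theorem 2 of the paper: closed-form `β` solves the normalization system,
with `P = n + 1` levels. -/
theorem srj_beta_formula (n : ℕ) (hn : 1 ≤ n)
    (ω : Fin (n + 1) → ℝ) (κ : Fin n → ℝ)
    (hω : Function.Injective ω) (hω0 : ∀ i, ω i ≠ 0)
    (hκ : Function.Injective κ)
    (h1 : ∀ (i : Fin n) (j : Fin (n + 1)), κ i * ω j ≠ 1)
    (β : Fin n → ℝ)
    (hβ : β = fun i =>
      (∏ k, (1 - κ k * ω i.castSucc)) *
        ∏ l ∈ univ.erase i.castSucc, ω l / (ω l - ω i.castSucc)) :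
    ∀ i : Fin n,
      ∑ j, (1 - ω j.castSucc / ω (Fin.last n)) * β j / (1 - κ i * ω j.castSucc) = 1 := by
  intro i
  subst hβ
  set v : Fin n → ℝ := fun j => ω j.castSucc with hv
  have hvinj : Set.InjOn v (univ : Finset (Fin n)) := by
    intro a _ b _ h
    exact Fin.castSucc_injective n (hω h)
  set f : ℝ[X] := ∏ k ∈ univ.erase i, (1 - C (κ k) * X) with hf
  have hdeg : f.degree < ((univ : Finset (Fin n)).card : ℕ) := by
    have h1' : f.natDegree ≤ ∑ k ∈ univ.erase i, (1 - C (κ k) * X).natDegree :=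
      Polynomial.natDegree_prod_le _ _
    have h2 : ∀ k ∈ univ.erase i, (1 - C (κ k) * X).natDegree ≤ 1 := by
      intro k _
      refine le_trans (Polynomial.natDegree_sub_le _ _) ?_
      simp [Polynomial.natDegree_C_mul_le]
      exact le_trans (Polynomial.natDegree_mul_le) (by simp)
    have h3 : f.natDegree ≤ (univ.erase i).card :=
      le_trans h1' (le_trans (Finset.sum_le_card_nsmul _ _ 1 h2) (by simp))
    have h4 : (univ.erase i).card < (univ : Finset (Fin n)).card :=
      Finset.card_erase_lt_of_mem (mem_univ i)
    calc f.degree ≤ (f.natDegree : WithBot ℕ) := Polynomial.degree_le_natDegree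
      _ < ((univ : Finset (Fin n)).card : ℕ) := by exact_mod_cast lt_of_le_of_lt h3 h4
  have hint := Lagrange.eq_interpolate hvinj hdeg
  have h0 := congrArg (Polynomial.eval 0) hint
  rw [Lagrange.interpolate_apply] at h0
  simp only [Polynomial.eval_finset_sum, Polynomial.eval_mul, Polynomial.eval_C] at h0
  have hf0 : f.eval 0 = 1 := by simp [hf, Polynomial.eval_prod]
  rw [hf0] at h0
  conv_rhs => rw [h0]
  apply Finset.sum_congr rfl
  intro j _
  simp only []
  -- per-term equality
  have hbasis : Polynomial.eval 0 (Lagrange.basis univ v j)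
      = ∏ l ∈ univ.erase j, ω l.castSucc / (ω l.castSucc - ω j.castSucc) := by
    rw [Lagrange.basis, Polynomial.eval_prod]
    apply Finset.prod_congr rfl
    intro l _
    rw [Lagrange.basisDivisor]
    simp only [Polynomial.eval_mul, Polynomial.eval_C, Polynomial.eval_sub, Polynomial.eval_X]
    rw [zero_sub, inv_mul_eq_div, div_eq_div_iff]
    · ring
    · exact sub_ne_zero.mpr fun h => (Finset.mem_erase.mp ‹l ∈ univ.erase j›).1 ((Fin.castSucc_injective n (hω h.symm)))
    · exact sub_ne_zero.mpr fun h => (Finset.mem_erase.mp ‹l ∈ univ.erase j›).1 ((Fin.castSucc_injective n (hω h)))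
  have hfev : f.eval (v j) = ∏ k ∈ univ.erase i, (1 - κ k * ω j.castSucc) := by
    simp [hf, hv, Polynomial.eval_prod]
  rw [hbasis, hfev]
  -- split ∏ k over all k into (1 - κ i ω j) * rest
  have hk : (∏ k, (1 - κ k * ω j.castSucc))
      = (1 - κ i * ω j.castSucc) * ∏ k ∈ univ.erase i, (1 - κ k * ω j.castSucc) :=
    (Finset.mul_prod_erase univ _ (mem_univ i)).symm
  -- split the l-product over Fin (n+1)
  have hset : (univ : Finset (Fin (n+1))).erase j.castSucc
      = insert (Fin.last n) ((univ.erase j).image Fin.castSucc) := by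
    ext x
    simp only [mem_erase, mem_univ, and_true, mem_insert, mem_image, true_and]
    constructor
    · intro hx
      rcases Fin.eq_castSucc_or_eq_last x with ⟨y, rfl⟩ | rfl
      · exact Or.inr ⟨y, fun hy => hx (by rw [hy]), rfl⟩
      · exact Or.inl rfl
    · rintro (rfl | ⟨a, ha, rfl⟩)
      · exact (Fin.castSucc_lt_last j).ne'
      · exact fun h => ha (Fin.castSucc_injective n h)
  have hnotmem : Fin.last n ∉ (univ.erase j).image Fin.castSucc := by
    simp only [mem_image, not_exists]
    rintro x ⟨-, hx⟩
    exact (Fin.castSucc_lt_last x).ne hx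
  have hl : ∏ l ∈ (univ : Finset (Fin (n+1))).erase j.castSucc, ω l / (ω l - ω j.castSucc)
      = (ω (Fin.last n) / (ω (Fin.last n) - ω j.castSucc)) *
        ∏ l ∈ univ.erase j, ω l.castSucc / (ω l.castSucc - ω j.castSucc) := by
    rw [hset, Finset.prod_insert hnotmem,
      Finset.prod_image (fun a _ b _ h => Fin.castSucc_injective n h)]
  rw [hk, hl]
  have hc : 1 - κ i * ω j.castSucc ≠ 0 := sub_ne_zero.mpr fun h => h1 i j.castSucc h.symm
  have hL : ω (Fin.last n) ≠ 0 := hω0 _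
  have hLa : ω (Fin.last n) - ω j.castSucc ≠ 0 :=
    sub_ne_zero.mpr fun h => (Fin.castSucc_lt_last j).ne' (hω h)
  set A := ∏ k ∈ univ.erase i, (1 - κ k * ω j.castSucc) with hA
  set Pr := ∏ l ∈ univ.erase j, ω l.castSucc / (ω l.castSucc - ω j.castSucc) with hPr
  clear_value A Pr
  have hc' : 1 - ω j.castSucc * κ i ≠ 0 := by rwa [mul_comm]
  field_simp
end

section
/- With the same setup, the effective matrix is also weakly diagonally dominant by columns: for every column j (j = 2,…,N), |Â_{jj}| ≥ Σ_{i≠j} |Â_{ij}|. -/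
open Finset

/-- The effective coefficient matrix of the 1D finite-difference discretization of
the spherical Poisson equation, with indices `i, j = 2, …, N` (here represented by
`Fin (N-1)`, index `i : Fin (N-1)` corresponding to the grid index `i.1 + 2`). -/
noncomputable def Ahat (N : ℕ) : Matrix (Fin (N - 1)) (Fin (N - 1)) ℝ :=
  fun i j =>
    let Δr : ℝ := 1 / N
    let r : ℕ → ℝ := fun m => ((m : ℝ) - 1 / 2) * Δr
    let ii := i.1 + 2
    let jj := j.1 + 2
    if i.1 = 0 then
      if jj = 2 then -(r 2 + 2 * Δr) * r 2 / Δr ^ 2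
      else if jj = 3 then (r 2 + 2 * Δr) * r 2 / Δr ^ 2
      else 0
    else
      if jj + 1 = ii then (r ii - 2 * Δr) * r ii / Δr ^ 2
      else if jj = ii then -2 * r ii ^ 2 / Δr ^ 2
      else if jj = ii + 1 then (r ii + 2 * Δr) * r ii / Δr ^ 2
      else 0

lemma Ahat_sub {N : ℕ} (hN : 3 ≤ N) {i j : Fin (N-1)} (h1 : 1 ≤ i.1) (h : j.1 + 1 = i.1) :
    Ahat N i j = ((i.1:ℝ) - 1/2) * ((i.1:ℝ) + 3/2) := by
  have hN0 : (N:ℝ) ≠ 0 := Nat.cast_ne_zero.mpr (by omega)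
  simp only [Ahat]
  rw [if_neg (by omega), if_pos (by omega)]
  push_cast; field_simp; ring

lemma Ahat_diag {N : ℕ} (hN : 3 ≤ N) {i j : Fin (N-1)} (h1 : 1 ≤ i.1) (h : j.1 = i.1) :
    Ahat N i j = -2 * ((i.1:ℝ) + 3/2) ^ 2 := by
  have hN0 : (N:ℝ) ≠ 0 := Nat.cast_ne_zero.mpr (by omega)
  simp only [Ahat]
  rw [if_neg (by omega), if_neg (by omega), if_pos (by omega)]
  push_cast; field_simp; ring

lemma Ahat_super {N : ℕ} (hN : 3 ≤ N) {i j : Fin (N-1)} (h1 : 1 ≤ i.1) (h : j.1 = i.1 + 1) :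
    Ahat N i j = ((i.1:ℝ) + 7/2) * ((i.1:ℝ) + 3/2) := by
  have hN0 : (N:ℝ) ≠ 0 := Nat.cast_ne_zero.mpr (by omega)
  simp only [Ahat]
  rw [if_neg (by omega), if_neg (by omega), if_neg (by omega), if_pos (by omega)]
  push_cast; field_simp; ring

lemma Ahat_row0_diag {N : ℕ} (hN : 3 ≤ N) {i j : Fin (N-1)} (h1 : i.1 = 0) (h : j.1 = 0) :
    Ahat N i j = -(21/4 : ℝ) := by
  have hN0 : (N:ℝ) ≠ 0 := Nat.cast_ne_zero.mpr (by omega)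
  simp only [Ahat]
  rw [if_pos h1, if_pos (by omega)]
  push_cast; field_simp; ring

lemma Ahat_row0_super {N : ℕ} (hN : 3 ≤ N) {i j : Fin (N-1)} (h1 : i.1 = 0) (h : j.1 = 1) :
    Ahat N i j = (21/4 : ℝ) := by
  have hN0 : (N:ℝ) ≠ 0 := Nat.cast_ne_zero.mpr (by omega)
  simp only [Ahat]
  rw [if_pos h1, if_neg (by omega), if_pos (by omega)]
  push_cast; field_simp; ring

lemma Ahat_zero {N : ℕ} {i j : Fin (N-1)} (h1 : i.1 + 1 ≠ j.1) (h2 : i.1 ≠ j.1)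
    (h3 : i.1 ≠ j.1 + 1) : Ahat N i j = 0 := by
  simp only [Ahat]
  split_ifs <;> first | rfl | (exfalso; omega)

/-- The effective matrix `Â` is weakly diagonally dominant by columns. -/
theorem Ahat_column_diagonally_dominant (N : ℕ) (hN : 3 ≤ N) :
    ∀ j : Fin (N - 1), ∑ i ∈ univ.erase j, |Ahat N i j| ≤ |Ahat N j j| := by
  intro j
  have hn : 2 ≤ N - 1 := by omega
  have hk : j.1 < N - 1 := j.2
  have hzero : ∀ i ∈ univ.erase j, ¬(i.1 + 1 = j.1 ∨ i.1 = j.1 + 1) → |Ahat N i j| = 0 := by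
    intro i hi hc
    push_neg at hc
    have hij : i ≠ j := (mem_erase.mp hi).1
    have : i.1 ≠ j.1 := fun h => hij (Fin.ext h)
    rw [abs_eq_zero]
    exact Ahat_zero hc.1 this hc.2
  rw [← Finset.sum_filter_of_ne (fun i hi h => by_contra fun hc => h (hzero i hi hc))]
  rcases Nat.eq_zero_or_pos j.1 with hk0 | hk1
  · -- j.1 = 0 : only possible row is i.1 = 1
    have hsub : (univ.erase j).filter (fun i => i.1 + 1 = j.1 ∨ i.1 = j.1 + 1)
        ⊆ {(⟨1, by omega⟩ : Fin (N-1))} := by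
      intro i hi
      rcases (mem_filter.mp hi).2 with h | h
      · omega
      · simp only [mem_singleton]; exact Fin.ext (show i.1 = 1 by omega)
    calc ∑ i ∈ (univ.erase j).filter (fun i => i.1 + 1 = j.1 ∨ i.1 = j.1 + 1), |Ahat N i j|
        ≤ ∑ i ∈ {(⟨1, by omega⟩ : Fin (N-1))}, |Ahat N i j| :=
          Finset.sum_le_sum_of_subset_of_nonneg hsub (fun i _ _ => abs_nonneg _)
      _ ≤ |Ahat N j j| := by
          rw [Finset.sum_singleton, Ahat_sub hN (show (1:ℕ) ≤ 1 by norm_num) (show j.1 + 1 = 1 by omega),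
            Ahat_row0_diag hN hk0 hk0]
          rw [abs_of_nonneg (by norm_num), abs_of_nonpos (by norm_num)]
          norm_num
  · -- j.1 ≥ 1
    set a : Fin (N-1) := ⟨j.1 - 1, by omega⟩ with ha
    have haj : Ahat N a j ≤ |Ahat N a j| := le_abs_self _
    have hAa : |Ahat N a j| ≤ ((j.1:ℝ) + 5/2) * ((j.1:ℝ) + 1/2) := by
      rcases Nat.lt_or_ge j.1 2 with h2 | h2
      · -- j.1 = 1, a.1 = 0
        have hj1 : j.1 = 1 := by omega
        rw [Ahat_row0_super hN (by simp [ha]; omega) hj1, abs_of_nonneg (by norm_num), hj1]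
        push_cast; norm_num
      · have ha1 : (1:ℕ) ≤ a.1 := by simp [ha]; omega
        rw [Ahat_super hN ha1 (by simp [ha]; omega)]
        have hcast : ((a.1 : ℝ)) = (j.1 : ℝ) - 1 := by
          have : a.1 = j.1 - 1 := rfl
          rw [this]; push_cast [Nat.cast_sub (by omega : 1 ≤ j.1)]; ring
        rw [abs_of_nonneg (by positivity), hcast]
        nlinarith [(Nat.one_le_cast (α := ℝ)).mpr hk1]
    have hdiag : |Ahat N j j| = 2 * ((j.1:ℝ) + 3/2) ^ 2 := by
      rw [Ahat_diag hN hk1 rfl, abs_of_nonpos (by nlinarith [sq_nonneg ((j.1:ℝ) + 3/2)])]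
      ring
    rcases Nat.lt_or_ge (j.1 + 1) (N - 1) with hb | hb
    · -- both neighbors exist
      set b : Fin (N-1) := ⟨j.1 + 1, hb⟩ with hbdef
      have hab : a ≠ b := Fin.ne_of_val_ne (show j.1 - 1 ≠ j.1 + 1 by omega)
      have hAb : |Ahat N b j| = ((j.1:ℝ) + 5/2) * ((j.1:ℝ) + 1/2) := by
        rw [Ahat_sub hN (show (1:ℕ) ≤ b.1 by simp [hbdef]) (show j.1 + 1 = b.1 from rfl)]
        have hbc : ((b.1 : ℝ)) = (j.1 : ℝ) + 1 := by
          have : b.1 = j.1 + 1 := rfl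
          rw [this]; push_cast; ring
        rw [hbc, abs_of_nonneg (by nlinarith [Nat.cast_nonneg (α := ℝ) j.1])]
        ring
      have hsub : (univ.erase j).filter (fun i => i.1 + 1 = j.1 ∨ i.1 = j.1 + 1)
          ⊆ {a, b} := by
        intro i hi
        rcases (mem_filter.mp hi).2 with h | h
        · exact mem_insert.mpr (Or.inl (Fin.ext (by simp [ha]; omega)))
        · exact mem_insert.mpr (Or.inr (by simp only [mem_singleton]; exact Fin.ext h))
      calc ∑ i ∈ (univ.erase j).filter (fun i => i.1 + 1 = j.1 ∨ i.1 = j.1 + 1), |Ahat N i j|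
          ≤ ∑ i ∈ ({a, b} : Finset (Fin (N-1))), |Ahat N i j| :=
            Finset.sum_le_sum_of_subset_of_nonneg hsub (fun i _ _ => abs_nonneg _)
        _ ≤ |Ahat N j j| := by
            rw [Finset.sum_pair hab, hdiag, hAb]
            nlinarith [hAa, Nat.cast_nonneg (α := ℝ) j.1]
    · -- only lower neighbor exists
      have hsub : (univ.erase j).filter (fun i => i.1 + 1 = j.1 ∨ i.1 = j.1 + 1)
          ⊆ {a} := by
        intro i hi
        rcases (mem_filter.mp hi).2 with h | h
        · simp only [mem_singleton]; exact Fin.ext (by simp [ha]; omega)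
        · exact absurd i.2 (by omega)
      calc ∑ i ∈ (univ.erase j).filter (fun i => i.1 + 1 = j.1 ∨ i.1 = j.1 + 1), |Ahat N i j|
          ≤ ∑ i ∈ ({a} : Finset (Fin (N-1))), |Ahat N i j| :=
            Finset.sum_le_sum_of_subset_of_nonneg hsub (fun i _ _ => abs_nonneg _)
        _ ≤ |Ahat N j j| := by
            rw [Finset.sum_singleton, hdiag]
            nlinarith [hAa, Nat.cast_nonneg (α := ℝ) j.1]
end

section
/- Let P ≥ 2, ω₁,…,ω_P pairwise distinct nonzero reals, β₁,…,β_P nonzero reals, κ₁,…,κ_P pairwise distinct reals with κ_jω_i ≠ 1 and κ_j ≠ 0 for all i,j, and let ω_q, ω_P be arbitrary indices' weights with 1-κ_jω_P ≠ 0 and 1-κ_jω_q ≠ 0 for all j. Define x_i = Σ_{j=1}^P ∏_{k≠j} ∏_{l≠i} [(1-κ_jω_i)/(β_i κ_j)] · [(1-κ_kω_i)/(κ_k-κ_j)] · [(1-κ_jω_l)/(ω_l-ω_i)] · log|(1-κ_jω_q)/(1-κ_jω_P)|. Then x = (x₁,…,x_P) solves the linear system Σ_{i=1}^P [κ_jβ_i/(1-κ_jω_i)]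 x_i = log|(1-κ_jω_q)/(1-κ_jω_P)| for every j = 1,…,P. -/
open Finset Polynomial

lemma srj_key (P : ℕ) (ω κ : Fin P → ℝ) (hω : Function.Injective ω)
    (hκ : Function.Injective κ) (hκ0 : ∀ j, κ j ≠ 0) (j j' : Fin P) :
    ∑ i, (∏ k ∈ univ.erase j, (1 - κ k * ω i)) *
        ∏ l ∈ univ.erase i, ((1 - κ j' * ω l) / (ω l - ω i))
      = if j' = j then ∏ k ∈ univ.erase j, (κ k - κ j) else 0 := by
  set f : ℝ[X] := ∏ k ∈ univ.erase j, (1 - C (κ k) * X) with hf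
  have hdeg : f.degree < (univ : Finset (Fin P)).card := by
    have h1 : f.natDegree ≤ ∑ k ∈ univ.erase j, (1 - C (κ k) * X).natDegree :=
      Polynomial.natDegree_prod_le _ _
    have h2 : ∀ k : Fin P, (1 - C (κ k) * X).natDegree ≤ 1 := by
      intro k
      calc (1 - C (κ k) * X).natDegree ≤ max (1 : ℝ[X]).natDegree (C (κ k) * X).natDegree :=
            Polynomial.natDegree_sub_le _ _
        _ ≤ 1 := by
            simp only [Polynomial.natDegree_one, max_le_iff]
            exact ⟨Nat.zero_le 1, (Polynomial.natDegree_C_mul_le _ _).trans (by simp)⟩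
    have h3 : f.natDegree ≤ (univ.erase j).card := by
      calc f.natDegree ≤ ∑ k ∈ univ.erase j, (1 - C (κ k) * X).natDegree := h1
        _ ≤ ∑ _k ∈ univ.erase j, 1 := by exact Finset.sum_le_sum fun k _ => h2 k
        _ = (univ.erase j).card := by simp
    have h4 : (univ.erase j).card < (univ : Finset (Fin P)).card :=
      Finset.card_erase_lt_of_mem (mem_univ j)
    calc f.degree ≤ f.natDegree := Polynomial.degree_le_natDegree
      _ < (univ : Finset (Fin P)).card := by exact_mod_cast lt_of_le_of_lt h3 h4
  have heq := Lagrange.eq_interpolate (s := univ) (v := ω) (Set.injOn_of_injective hω) hdeg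
  set t : ℝ := (κ j')⁻¹ with ht
  have heval : f.eval t = ∑ i, f.eval (ω i) *
      ∏ l ∈ univ.erase i, ((ω i - ω l)⁻¹ * (t - ω l)) := by
    conv_lhs => rw [heq]
    rw [Lagrange.interpolate_apply, Polynomial.eval_finset_sum]
    refine Finset.sum_congr rfl fun i _ => ?_
    rw [Polynomial.eval_mul, Polynomial.eval_C]
    congr 1
    rw [Lagrange.basis, Polynomial.eval_prod]
    refine Finset.prod_congr rfl fun l _ => ?_
    simp [Lagrange.basisDivisor]
  -- rewrite each summand
  have hterm : ∀ i : Fin P,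
      (∏ k ∈ univ.erase j, (1 - κ k * ω i)) *
        ∏ l ∈ univ.erase i, ((1 - κ j' * ω l) / (ω l - ω i))
      = (-κ j')^((univ.erase i).card) *
        (f.eval (ω i) * ∏ l ∈ univ.erase i, ((ω i - ω l)⁻¹ * (t - ω l))) := by
    intro i
    have hfe : f.eval (ω i) = ∏ k ∈ univ.erase j, (1 - κ k * ω i) := by
      simp [hf, Polynomial.eval_prod]
    rw [hfe]
    rw [← mul_assoc, mul_comm ((-κ j')^((univ.erase i).card)), mul_assoc]
    congr 1
    rw [← Finset.prod_const, ← Finset.prod_mul_distrib]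
    refine Finset.prod_congr rfl fun l hl => ?_
    have hli : ω l - ω i ≠ 0 := sub_ne_zero.mpr (fun h => (mem_erase.mp hl).1 (hω h))
    have hil : ω i - ω l ≠ 0 := sub_ne_zero.mpr (fun h => (mem_erase.mp hl).1 (hω h.symm))
    have hk : κ j' ≠ 0 := hκ0 j'
    rw [ht]
    field_simp
    ring
  have hcard : ∀ i : Fin P, (univ.erase i).card = P - 1 := fun i => by simp
  have hsum : ∑ i, (∏ k ∈ univ.erase j, (1 - κ k * ω i)) *
        ∏ l ∈ univ.erase i, ((1 - κ j' * ω l) / (ω l - ω i))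
      = (-κ j')^(P-1) * f.eval t := by
    rw [heval, Finset.mul_sum]
    exact Finset.sum_congr rfl fun i _ => by rw [hterm i, hcard i]
  rw [hsum]
  by_cases hjj : j' = j
  · subst hjj
    simp only [if_pos rfl]
    have : f.eval t = ∏ k ∈ univ.erase j', (1 - κ k * t) := by
      simp [hf, Polynomial.eval_prod]
    rw [this]
    have hcard' : (univ.erase j' : Finset (Fin P)).card = P - 1 := by simp
    rw [← hcard', ← Finset.prod_const, ← Finset.prod_mul_distrib]
    refine Finset.prod_congr rfl fun k _ => ?_
    have : κ j' ≠ 0 := hκ0 j'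
    field_simp [ht]
    rw [ht, mul_sub, mul_one, mul_left_comm, mul_inv_cancel₀ this, mul_one]
    ring
  · simp only [if_neg hjj]
    have : f.eval t = 0 := by
      rw [hf, Polynomial.eval_prod]
      refine Finset.prod_eq_zero (Finset.mem_erase.mpr ⟨hjj, mem_univ j'⟩) ?_
      simp [ht, hκ0 j']
    rw [this, mul_zero]

/-- Theorem 1 of the paper: closed-form solution of the linear system for the
ancillary variables `∂ω/∂β_q`. -/
theorem srj_ancillary_formula (P : ℕ) (hP : 2 ≤ P) (ω β κ : Fin P → ℝ)
    (hω : Function.Injective ω) (hω0 : ∀ i, ω i ≠ 0)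
    (hβ : ∀ i, β i ≠ 0)
    (hκ : Function.Injective κ) (hκ0 : ∀ j, κ j ≠ 0)
    (h1 : ∀ i j, κ j * ω i ≠ 1)
    (q p : Fin P)
    (hp : ∀ j, 1 - κ j * ω p ≠ 0) (hq : ∀ j, 1 - κ j * ω q ≠ 0)
    (x : Fin P → ℝ)
    (hx : x = fun i => ∑ j,
      (1 - κ j * ω i) / (β i * κ j) *
        (∏ k ∈ univ.erase j, (1 - κ k * ω i) / (κ k - κ j)) *
        (∏ l ∈ univ.erase i, (1 - κ j * ω l) / (ω l - ω i)) *
        Real.log |(1 - κ j * ω q) / (1 - κ j * ω p)|) :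
    ∀ j, ∑ i, κ j * β i / (1 - κ j * ω i) * x i =
      Real.log |(1 - κ j * ω q) / (1 - κ j * ω p)| := by
  subst hx
  intro j
  have hκω : ∀ i k, (1 : ℝ) - κ k * ω i ≠ 0 := fun i k => sub_ne_zero.mpr (Ne.symm (h1 i k))
  have hD : ∀ j' : Fin P, (∏ k ∈ univ.erase j', (κ k - κ j')) ≠ 0 := fun j' =>
    Finset.prod_ne_zero_iff.mpr fun k hk =>
      sub_ne_zero.mpr fun h => (mem_erase.mp hk).1 (hκ h)
  set L : Fin P → ℝ := fun j' => Real.log |(1 - κ j' * ω q) / (1 - κ j' * ω p)| with hL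
  -- per-(i,j') coefficient identity
  have hT : ∀ (j' i : Fin P),
      κ j * β i / (1 - κ j * ω i) * ((1 - κ j' * ω i) / (β i * κ j') *
        (∏ k ∈ univ.erase j', (1 - κ k * ω i) / (κ k - κ j')) *
        (∏ l ∈ univ.erase i, (1 - κ j' * ω l) / (ω l - ω i)))
      = κ j / (κ j' * ∏ k ∈ univ.erase j', (κ k - κ j')) *
        ((∏ k ∈ univ.erase j, (1 - κ k * ω i)) *
          ∏ l ∈ univ.erase i, ((1 - κ j' * ω l) / (ω l - ω i))) := by
    intro j' i
    have hmul : (1 - κ j' * ω i) * ∏ k ∈ univ.erase j', (1 - κ k * ω i)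
        = (1 - κ j * ω i) * ∏ k ∈ univ.erase j, (1 - κ k * ω i) := by
      rw [Finset.mul_prod_erase univ (fun k => 1 - κ k * ω i) (mem_univ j'),
        Finset.mul_prod_erase univ (fun k => 1 - κ k * ω i) (mem_univ j)]
    have base : κ j * β i / (1 - κ j * ω i) * ((1 - κ j' * ω i) / (β i * κ j') *
          ((∏ k ∈ univ.erase j', (1 - κ k * ω i)) / ∏ k ∈ univ.erase j', (κ k - κ j')))
        = κ j / (κ j' * ∏ k ∈ univ.erase j', (κ k - κ j')) *
          ∏ k ∈ univ.erase j, (1 - κ k * ω i) := by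
      rw [div_mul_div_comm, hmul]
      have h1' := hκω i j
      have h2' := hβ i
      have h3' := hκ0 j'
      have h4' := hD j'
      field_simp
    rw [Finset.prod_div_distrib, ← mul_assoc, base, mul_assoc]
  -- swap sums and collapse
  calc ∑ i, κ j * β i / (1 - κ j * ω i) * (∑ j',
        (1 - κ j' * ω i) / (β i * κ j') *
        (∏ k ∈ univ.erase j', (1 - κ k * ω i) / (κ k - κ j')) *
        (∏ l ∈ univ.erase i, (1 - κ j' * ω l) / (ω l - ω i)) * L j')
      = ∑ j', (∑ i, κ j * β i / (1 - κ j * ω i) *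
          ((1 - κ j' * ω i) / (β i * κ j') *
          (∏ k ∈ univ.erase j', (1 - κ k * ω i) / (κ k - κ j')) *
          (∏ l ∈ univ.erase i, (1 - κ j' * ω l) / (ω l - ω i)))) * L j' := by
        simp_rw [Finset.mul_sum, Finset.sum_mul]
        rw [Finset.sum_comm]
        exact Finset.sum_congr rfl fun j' _ => Finset.sum_congr rfl fun i _ => by ring
    _ = ∑ j', (if j' = j then (1:ℝ) else 0) * L j' := by
        refine Finset.sum_congr rfl fun j' _ => ?_
        congr 1
        simp_rw [hT j']
        rw [← Finset.mul_sum, srj_key P ω κ hω hκ hκ0 j j']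
        by_cases h : j' = j
        · subst h
          rw [if_pos rfl, if_pos rfl]
          have gen : ∀ a b : ℝ, a ≠ 0 → b ≠ 0 → a / (a * b) * b = 1 := by
            intro a b ha hb; field_simp
          exact gen _ _ (hκ0 _) (hD _)
        · rw [if_neg h, if_neg h, mul_zero]
    _ = L j := by
        simp only [ite_mul, one_mul, zero_mul]
        rw [Finset.sum_ite_eq' univ j L, if_pos (mem_univ j)]
end
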